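/- arXiv:2503.01173 — 2 statements merged into one kernel-verified Lean document; each statement's English description precedes it below -/
import Mathlib

section
/- Let M be a positive integer, m > 0, a ≥ 0, and b ≥ 0. Let G be a random variable with the Gamma(m, 1/m) density m^{m} x^{m−1} e^{−m x}/Γ(m) on (0, ∞). Then 𝔼[ 1 − (1 − exp(−(a G + b)))^{M} ] = Σ_{k=1}^{M} C(M, k) (−1)^{k+1} e^{−k b} (1 + k a/m)^{−m}, where C(M, k) is the binomial coefficient. -/
open MeasureTheory ProbabilityTheory Real
open scoped NNReal ENNReal

lemma aux_gamma_laplace {m c : ℝ} (hm : 0 < m) (hc : 0 ≤ c) :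
    ∫ x, Real.exp (-(c * x)) ∂(ProbabilityTheory.gammaMeasure m m)
      = (1 + c / m) ^ (-m) := by
  have hmc : 0 < m + c := by linarith
  have hpdf_meas : Measurable fun x => Real.toNNReal (gammaPDFReal m m x) :=
    (measurable_gammaPDFReal m m).real_toNNReal
  have hd : gammaPDF m m = fun x => ((Real.toNNReal (gammaPDFReal m m x) : ℝ≥0) : ℝ≥0∞) := rfl
  rw [gammaMeasure, hd, integral_withDensity_eq_integral_smul hpdf_meas]
  have h1 : ∀ x : ℝ, (Real.toNNReal (gammaPDFReal m m x)) • Real.exp (-(c * x))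
      = gammaPDFReal m m x * Real.exp (-(c * x)) := by
    intro x
    rw [NNReal.smul_def, Real.coe_toNNReal _ (gammaPDFReal_nonneg hm hm x), smul_eq_mul]
  simp_rw [h1]
  set h : ℝ → ℝ := fun x => gammaPDFReal m m x * Real.exp (-(c * x)) with hh
  have hind : h =ᵐ[volume] (Set.Ioi (0:ℝ)).indicator h := by
    rw [Filter.eventuallyEq_iff_exists_mem]
    refine ⟨{0}ᶜ, ?_, ?_⟩
    · rw [MeasureTheory.mem_ae_iff, compl_compl]; exact measure_singleton 0
    · intro x hx
      rcases lt_trichotomy x 0 with hx0 | hx0 | hx0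
      · simp [hh, Set.indicator_of_notMem (by simpa using hx0.not_gt : x ∉ Set.Ioi (0:ℝ)),
          gammaPDFReal, not_le.2 hx0]
      · exact absurd hx0 (by simpa using hx)
      · rw [Set.indicator_of_mem (Set.mem_Ioi.mpr hx0)]
  rw [integral_congr_ae hind, integral_indicator measurableSet_Ioi]
  have heq : ∀ x ∈ Set.Ioi (0:ℝ), h x
      = m ^ m / Real.Gamma m * (x ^ (m - 1) * Real.exp (-((m + c) * x))) := by
    intro x hx
    have hx0 : (0:ℝ) ≤ x := (Set.mem_Ioi.1 hx).le
    simp only [hh, gammaPDFReal, if_pos hx0]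
    rw [mul_assoc, mul_assoc, ← Real.exp_add]
    ring_nf
  rw [setIntegral_congr_fun measurableSet_Ioi heq, integral_const_mul,
    integral_rpow_mul_exp_neg_mul_Ioi hm hmc]
  have hΓ : Real.Gamma m ≠ 0 := (Real.Gamma_pos_of_pos hm).ne'
  have key : m * (1 / (m + c)) = (1 + c / m)⁻¹ := by
    rw [eq_comm, inv_eq_iff_eq_inv]
    field_simp
  rw [Real.rpow_neg (by positivity), ← Real.inv_rpow (by positivity), ← key,
    Real.mul_rpow hm.le (by positivity)]
  field_simp

lemma aux_binom (M : ℕ) (t : ℝ) :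
    1 - (1 - t) ^ M = ∑ k ∈ Finset.Icc 1 M, (M.choose k : ℝ) * (-1 : ℝ) ^ (k + 1) * t ^ k := by
  have h : (1 - t) ^ M = ∑ k ∈ Finset.range (M + 1), (-t) ^ k * (M.choose k : ℝ) := by
    have := add_pow (-t) 1 M
    simp only [one_pow, mul_one] at this
    rw [sub_eq_add_neg, add_comm, ← this]
  have hset : (Finset.range (M + 1)).erase 0 = Finset.Icc 1 M := by
    ext k; simp [Finset.mem_erase, Finset.mem_range, Finset.mem_Icc]; omega
  have h2 := Finset.add_sum_erase (Finset.range (M + 1))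
    (fun k => (-t) ^ k * (M.choose k : ℝ)) (Finset.mem_range.2 (Nat.succ_pos M))
  rw [h, ← h2, hset]
  simp only [pow_zero, Nat.choose_zero_right, Nat.cast_one, one_mul]
  rw [sub_add_eq_sub_sub, sub_self, zero_sub, ← Finset.sum_neg_distrib]
  refine Finset.sum_congr rfl fun k _ => ?_
  rw [neg_pow, pow_succ]
  ring

/-- Core computation in the proof of Lemma 5: for a positive integer `M`, `m > 0`,
`a ≥ 0`, `b ≥ 0`, and `G` a Gamma(m, 1/m)-distributed random variable (density
`m^m x^(m−1) e^(−m x)/Γ(m)` on `(0, ∞)`, i.e. rate `m`),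
`𝔼[1 − (1 − e^(−(aG+b)))^M] = Σ_{k=1}^{M} C(M,k) (−1)^(k+1) e^(−kb) (1 + ka/m)^(−m)`. -/
theorem stmt_8 (M : ℕ) (hM : 0 < M) (m a b : ℝ) (hm : 0 < m) (ha : 0 ≤ a) (hb : 0 ≤ b)
    {Ω : Type*} [MeasurableSpace Ω] (P : Measure Ω) [IsProbabilityMeasure P]
    (G : Ω → ℝ) (hG : Measurable G)
    (hlaw : Measure.map G P = ProbabilityTheory.gammaMeasure m m) :
    ∫ ω, (1 - (1 - Real.exp (-(a * G ω + b))) ^ M) ∂P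
      = ∑ k ∈ Finset.Icc 1 M,
          (M.choose k : ℝ) * (-1 : ℝ) ^ (k + 1) * Real.exp (-(k : ℝ) * b) *
            (1 + (k : ℝ) * a / m) ^ (-m) := by
  have hG0 : ∀ᵐ ω ∂P, 0 ≤ G ω := by
    rw [ae_iff]
    have hs : {ω | ¬ 0 ≤ G ω} = G ⁻¹' (Set.Iio 0) := by ext ω; simp
    rw [hs, ← Measure.map_apply hG measurableSet_Iio, hlaw, gammaMeasure,
      withDensity_apply _ measurableSet_Iio, lintegral_gammaPDF_of_nonpos le_rfl]
  have hpt : ∀ᵐ ω ∂P, 1 - (1 - Real.exp (-(a * G ω + b))) ^ M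
      = ∑ k ∈ Finset.Icc 1 M, ((M.choose k : ℝ) * (-1 : ℝ) ^ (k + 1) * Real.exp (-(k : ℝ) * b))
          * Real.exp (-((k : ℝ) * a * G ω)) := by
    filter_upwards with ω
    rw [aux_binom]
    refine Finset.sum_congr rfl fun k _ => ?_
    have he : Real.exp ((k : ℝ) * -(a * G ω + b))
        = Real.exp (-(k : ℝ) * b) * Real.exp (-((k : ℝ) * a * G ω)) := by
      rw [← Real.exp_add]; congr 1; ring
    rw [← Real.exp_nat_mul, he]; ring
  rw [integral_congr_ae hpt]
  have hint : ∀ k : ℕ, Integrable (fun ω => Real.exp (-((k : ℝ) * a * G ω))) P := by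
    intro k
    refine Integrable.mono' (integrable_const 1)
      ((((hG.const_mul _).neg).exp).aestronglyMeasurable) ?_
    filter_upwards [hG0] with ω hω
    rw [Real.norm_eq_abs, Real.abs_exp]
    exact Real.exp_le_one_iff.mpr
      (neg_nonpos.mpr (mul_nonneg (mul_nonneg (Nat.cast_nonneg k) ha) hω))
  rw [integral_finset_sum _ fun k _ => ((hint k).const_mul _)]
  refine Finset.sum_congr rfl fun k _ => ?_
  rw [integral_const_mul]
  have hmap : ∫ ω, Real.exp (-((k : ℝ) * a * G ω)) ∂P
      = ∫ x, Real.exp (-((k : ℝ) * a * x)) ∂(ProbabilityTheory.gammaMeasure m m) := by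
    rw [← hlaw, integral_map hG.aemeasurable (f := fun x : ℝ => Real.exp (-((k : ℝ) * a * x)))
      (((measurable_const_mul _).neg).exp).aestronglyMeasurable]
  rw [hmap, aux_gamma_laplace hm (by positivity)]
end

section
/- Let m_l be a positive integer and β_l, θ, p_t, η_l > 0, α_l > 0, h ≥ 0, R₀ ≥ 0, R_l ≥ 0, c ≥ 0. Let G_l be a random variable with Gamma(m_l, 1/m_l) density m_l^{m_l} x^{m_l−1} e^{−m_l x}/Γ(m_l) on (0, ∞). Then 𝔼[ 1 − (1 − exp(−β_l m_l θ (p_t η_l G_l (R_l² + h²)^{−α_l/2} + c) · (p_t η_l (R₀² + h²)^{−α_l/2})^{−1}))^{m_l} ] = Σ_{k=1}^{m_l} C(m_l, k) (−1)^{k+1} exp(−k β_l m_l θ c (R₀² + h²)^{α_l/2}/(p_t η_l)) · (1 + k β_l θ (R_l² + h²)^{−α_l/2} (R₀² + h²)^{α_l/2})^{−m_l}. -/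
open MeasureTheory ProbabilityTheory Real
open scoped NNReal ENNReal

lemma my_gamma_ae_nonneg (a r : ℝ) :
    ∀ᵐ x ∂(ProbabilityTheory.gammaMeasure a r), 0 ≤ x := by
  rw [ae_iff]
  have hs : {x : ℝ | ¬ 0 ≤ x} = Set.Iio 0 := by ext x; simp [not_le]
  rw [hs, ProbabilityTheory.gammaMeasure, withDensity_apply _ measurableSet_Iio]
  simpa using ProbabilityTheory.lintegral_gammaPDF_of_nonpos (le_refl (0:ℝ)) (a := a) (r := r)

lemma my_gamma_exp_integrable {a r : ℝ} (ha : 0 < a) (hr : 0 < r) {u : ℝ} (hu : 0 ≤ u) :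
    Integrable (fun x => Real.exp (-(u * x))) (ProbabilityTheory.gammaMeasure a r) := by
  haveI := ProbabilityTheory.isProbabilityMeasure_gammaMeasure ha hr
  refine Integrable.mono' (integrable_const 1)
    ((Real.measurable_exp.comp (measurable_id.const_mul u).neg).aestronglyMeasurable) ?_
  filter_upwards [my_gamma_ae_nonneg a r] with x hx
  rw [Real.norm_eq_abs, abs_of_pos (Real.exp_pos _)]
  exact Real.exp_le_one_iff.mpr (neg_nonpos.mpr (mul_nonneg hu hx))

lemma my_gamma_laplace {a r u : ℝ} (ha : 0 < a) (hr : 0 < r) (hu : 0 ≤ u) :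
    ∫ x, Real.exp (-(u * x)) ∂(ProbabilityTheory.gammaMeasure a r)
      = (r / (r + u)) ^ a := by
  have hru : 0 < r + u := by linarith
  have hΓ : 0 < Real.Gamma a := Real.Gamma_pos_of_pos ha
  rw [ProbabilityTheory.gammaMeasure,
    show ProbabilityTheory.gammaPDF a r
        = fun x => ((Real.toNNReal (ProbabilityTheory.gammaPDFReal a r x) : ℝ≥0) : ℝ≥0∞) from rfl,
    integral_withDensity_eq_integral_smul
      ((ProbabilityTheory.measurable_gammaPDFReal a r).real_toNNReal) _]
  have hcong : (fun x => (Real.toNNReal (ProbabilityTheory.gammaPDFReal a r x) : ℝ≥0)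
        • Real.exp (-(u * x)))
      =ᵐ[volume] Set.indicator (Set.Ioi 0)
        (fun x => r ^ a / Real.Gamma a * (x ^ (a - 1) * Real.exp (-((r + u) * x)))) := by
    have h0 : ∀ᵐ (x : ℝ), x ≠ 0 := by
      rw [ae_iff]
      have : {x : ℝ | ¬ x ≠ 0} = {(0:ℝ)} := by ext x; simp
      simp [this]
    filter_upwards [h0] with x hx
    rw [NNReal.smul_def, smul_eq_mul,
      Real.coe_toNNReal _ (ProbabilityTheory.gammaPDFReal_nonneg ha hr x)]
    rcases hx.lt_or_gt with hneg | hpos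
    · rw [Set.indicator_of_notMem (by simpa using hneg.le)]
      simp [ProbabilityTheory.gammaPDFReal, not_le.mpr hneg]
    · rw [Set.indicator_of_mem (by simpa using hpos)]
      simp only [ProbabilityTheory.gammaPDFReal, if_pos hpos.le]
      rw [mul_assoc, mul_assoc, ← Real.exp_add]
      ring_nf
  rw [integral_congr_ae hcong, integral_indicator measurableSet_Ioi,
    MeasureTheory.integral_const_mul,
    integral_rpow_mul_exp_neg_mul_Ioi ha hru]
  rw [Real.div_rpow hr.le hru.le, Real.div_rpow (by norm_num) hru.le, Real.one_rpow]
  field_simp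

lemma my_expand (m : ℕ) (y : ℝ) :
    1 - (1 - Real.exp (-y)) ^ m
      = ∑ k ∈ Finset.Icc 1 m, (m.choose k : ℝ) * (-1 : ℝ) ^ (k + 1)
          * Real.exp (-((k : ℝ) * y)) := by
  have hbin : (1 - Real.exp (-y)) ^ m
      = ∑ k ∈ Finset.range (m + 1), (-Real.exp (-y)) ^ k * (m.choose k : ℝ) := by
    rw [show (1 - Real.exp (-y)) = -Real.exp (-y) + 1 by ring, add_pow]
    simp
  rw [hbin, Finset.sum_range_succ', ← Finset.Ico_add_one_right_eq_Icc, Finset.sum_Ico_eq_sum_range]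
  simp only [Nat.add_sub_cancel, Nat.choose_zero_right, pow_zero, Nat.cast_one, one_mul]
  rw [show (1 : ℝ) - (∑ k ∈ Finset.range m, (-Real.exp (-y)) ^ (k + 1) * (m.choose (k + 1) : ℝ) + 1)
      = ∑ k ∈ Finset.range m, -((-Real.exp (-y)) ^ (k + 1) * (m.choose (k + 1) : ℝ)) by
    rw [Finset.sum_neg_distrib]; ring]
  refine Finset.sum_congr rfl fun i _ => ?_
  have he : Real.exp (-((1 + i : ℕ) * y)) = Real.exp (-y) ^ (1 + i) := by
    rw [← Real.exp_nat_mul]; ring_nf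
  rw [he]
  push_cast
  ring_nf




/-- LoS–LoS term `κ_ll` of Lemma 5 as an exact identity for the surrogate model:
`G_l` is the dominant LoS interferer's Gamma(m_l, 1/m_l) fading power, and the
expectation of the surrogate CCDF evaluates to the stated binomial sum. -/
theorem stmt_10 (ml : ℕ) (hml : 0 < ml) (βl θ pt ηl αl : ℝ)
    (hβl : 0 < βl) (hθ : 0 < θ) (hpt : 0 < pt) (hηl : 0 < ηl) (hαl : 0 < αl)
    (h R₀ Rl c : ℝ) (hh : 0 ≤ h) (hR₀ : 0 ≤ R₀) (hRl : 0 ≤ Rl) (hc : 0 ≤ c)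
    {Ω : Type*} [MeasurableSpace Ω] (P : Measure Ω) [IsProbabilityMeasure P]
    (Gl : Ω → ℝ) (hGl : Measurable Gl)
    (hlaw : Measure.map Gl P = ProbabilityTheory.gammaMeasure (ml : ℝ) (ml : ℝ)) :
    ∫ ω, (1 - (1 - Real.exp (-(βl * (ml : ℝ) * θ *
            (pt * ηl * Gl ω * (Rl ^ 2 + h ^ 2) ^ (-(αl / 2)) + c) *
            (pt * ηl * (R₀ ^ 2 + h ^ 2) ^ (-(αl / 2)))⁻¹))) ^ ml) ∂P
      = ∑ k ∈ Finset.Icc 1 ml,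
          (ml.choose k : ℝ) * (-1 : ℝ) ^ (k + 1) *
            Real.exp (-((k : ℝ) * βl * (ml : ℝ) * θ * c * (R₀ ^ 2 + h ^ 2) ^ (αl / 2) /
              (pt * ηl))) *
            (1 + (k : ℝ) * βl * θ * (Rl ^ 2 + h ^ 2) ^ (-(αl / 2)) *
                (R₀ ^ 2 + h ^ 2) ^ (αl / 2)) ^ (-(ml : ℝ)) := by
  have hmlR : (0 : ℝ) < (ml : ℝ) := by exact_mod_cast hml
  have hX2 : 0 ≤ R₀ ^ 2 + h ^ 2 := by positivity
  have hA0 : 0 ≤ (Rl ^ 2 + h ^ 2) ^ (-(αl / 2)) := Real.rpow_nonneg (by positivity) _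
  rcases eq_or_lt_of_le hX2 with hX0 | hX
  · -- degenerate case R₀² + h² = 0
    have hXeq : R₀ ^ 2 + h ^ 2 = 0 := hX0.symm
    have hrp : (R₀ ^ 2 + h ^ 2) ^ (-(αl / 2)) = 0 := by
      rw [hXeq]; exact Real.zero_rpow (by intro hcon; nlinarith [neg_eq_zero.mp hcon])
    have hrp2 : (R₀ ^ 2 + h ^ 2) ^ (αl / 2) = 0 := by
      rw [hXeq]; exact Real.zero_rpow (by positivity)
    simp only [hrp, hrp2, mul_zero, inv_zero, zero_div, neg_zero, Real.exp_zero, sub_self,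
      zero_pow hml.ne', sub_zero, mul_one, add_zero, Real.one_rpow]
    rw [integral_const, probReal_univ, one_smul]
    have := my_expand ml 0
    simp only [neg_zero, Real.exp_zero, sub_self, zero_pow hml.ne', sub_zero, mul_zero,
      mul_one] at this
    exact this
  · -- main case
    set A := (Rl ^ 2 + h ^ 2) ^ (-(αl / 2)) with hA
    set B := (R₀ ^ 2 + h ^ 2) ^ (αl / 2) with hB
    have hB0 : 0 < B := Real.rpow_pos_of_pos hX _
    have hinv : (pt * ηl * (R₀ ^ 2 + h ^ 2) ^ (-(αl / 2)))⁻¹ = B / (pt * ηl) := by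
      rw [Real.rpow_neg hX.le, ← hB]
      field_simp
    set s := βl * θ * A * B with hs
    have hs0 : 0 ≤ s := by positivity
    set t := βl * (ml : ℝ) * θ * c * B / (pt * ηl) with ht
    have hexparg : ∀ x : ℝ,
        -(βl * (ml : ℝ) * θ * (pt * ηl * x * A + c) *
            (pt * ηl * (R₀ ^ 2 + h ^ 2) ^ (-(αl / 2)))⁻¹)
          = -(((ml : ℝ) * s) * x + t) := by
      intro x
      rw [hinv, hs, ht]
      field_simp
    haveI : IsProbabilityMeasure (ProbabilityTheory.gammaMeasure (ml : ℝ) (ml : ℝ)) :=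
      ProbabilityTheory.isProbabilityMeasure_gammaMeasure hmlR hmlR
    have hmeasF : ∀ u t' : ℝ, Measurable fun x : ℝ =>
        (1 : ℝ) - (1 - Real.exp (-(u * x + t'))) ^ ml := by
      intro u t'
      fun_prop
    calc ∫ ω, (1 - (1 - Real.exp (-(βl * (ml : ℝ) * θ *
            (pt * ηl * Gl ω * A + c) *
            (pt * ηl * (R₀ ^ 2 + h ^ 2) ^ (-(αl / 2)))⁻¹))) ^ ml) ∂P
        = ∫ ω, (1 - (1 - Real.exp (-(((ml : ℝ) * s) * Gl ω + t))) ^ ml) ∂P := by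
          refine integral_congr_ae (ae_of_all _ fun ω => ?_)
          simp only [hexparg (Gl ω)]
      _ = ∫ x, (1 - (1 - Real.exp (-(((ml : ℝ) * s) * x + t))) ^ ml)
            ∂(ProbabilityTheory.gammaMeasure (ml : ℝ) (ml : ℝ)) := by
          rw [← hlaw]
          exact (integral_map hGl.aemeasurable
            (hmeasF _ _).aestronglyMeasurable).symm
      _ = ∫ x, (∑ k ∈ Finset.Icc 1 ml, (ml.choose k : ℝ) * (-1 : ℝ) ^ (k + 1)
            * Real.exp (-((k : ℝ) * (((ml : ℝ) * s) * x + t))))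
            ∂(ProbabilityTheory.gammaMeasure (ml : ℝ) (ml : ℝ)) := by
          refine integral_congr_ae (ae_of_all _ fun x => ?_)
          exact my_expand ml _
      _ = ∑ k ∈ Finset.Icc 1 ml, ∫ x, (ml.choose k : ℝ) * (-1 : ℝ) ^ (k + 1)
            * Real.exp (-((k : ℝ) * (((ml : ℝ) * s) * x + t)))
            ∂(ProbabilityTheory.gammaMeasure (ml : ℝ) (ml : ℝ)) := by
          refine integral_finset_sum _ fun k _ => ?_
          have hfun : (fun x : ℝ => (ml.choose k : ℝ) * (-1 : ℝ) ^ (k + 1)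
              * Real.exp (-((k : ℝ) * (((ml : ℝ) * s) * x + t))))
              = fun x : ℝ => ((ml.choose k : ℝ) * (-1 : ℝ) ^ (k + 1)
                * Real.exp (-((k : ℝ) * t))) * Real.exp (-(((k : ℝ) * (ml : ℝ) * s) * x)) := by
            funext x
            have hx : Real.exp (-((k : ℝ) * (((ml : ℝ) * s) * x + t)))
                = Real.exp (-((k : ℝ) * t)) * Real.exp (-(((k : ℝ) * (ml : ℝ) * s) * x)) := by
              rw [← Real.exp_add]; ring_nf
            rw [hx]; ring
          rw [hfun]
          exact (my_gamma_exp_integrable hmlR hmlR (by positivity)).const_mul _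
      _ = ∑ k ∈ Finset.Icc 1 ml,
          (ml.choose k : ℝ) * (-1 : ℝ) ^ (k + 1) *
            Real.exp (-((k : ℝ) * βl * (ml : ℝ) * θ * c * B / (pt * ηl))) *
            (1 + (k : ℝ) * βl * θ * A * B) ^ (-(ml : ℝ)) := by
          refine Finset.sum_congr rfl fun k _ => ?_
          have hfun : (fun x : ℝ => (ml.choose k : ℝ) * (-1 : ℝ) ^ (k + 1)
              * Real.exp (-((k : ℝ) * (((ml : ℝ) * s) * x + t))))
              = fun x : ℝ => ((ml.choose k : ℝ) * (-1 : ℝ) ^ (k + 1)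
                * Real.exp (-((k : ℝ) * t))) * Real.exp (-(((k : ℝ) * (ml : ℝ) * s) * x)) := by
            funext x
            have hx : Real.exp (-((k : ℝ) * (((ml : ℝ) * s) * x + t)))
                = Real.exp (-((k : ℝ) * t)) * Real.exp (-(((k : ℝ) * (ml : ℝ) * s) * x)) := by
              rw [← Real.exp_add]; ring_nf
            rw [hx]; ring
          rw [hfun, MeasureTheory.integral_const_mul,
            my_gamma_laplace hmlR hmlR (by positivity)]
          have hks : 0 < 1 + (k : ℝ) * s := by positivity
          have h1 : (ml : ℝ) / ((ml : ℝ) + (k : ℝ) * (ml : ℝ) * s)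
              = (1 + (k : ℝ) * s)⁻¹ := by
            rw [div_eq_iff (by positivity)]
            field_simp
          have hb' : 1 + (k : ℝ) * s = 1 + (k : ℝ) * βl * θ * A * B := by
            rw [hs]; ring
          have he' : -((k : ℝ) * t) = -((k : ℝ) * βl * (ml : ℝ) * θ * c * B / (pt * ηl)) := by
            rw [ht]; ring
          rw [h1, Real.inv_rpow hks.le, ← Real.rpow_neg hks.le, hb', he']
end
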